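/- Let I be an infinite index set, 1 ≤ p ≤ q ≤ ∞, and v, w positive weight functions on I. The embedding ℓ^p_w(I) → ℓ^q_v(I) is compact if and only if the sequence (v(i)/w(i))_{i ∈ I} belongs to c₀(I), i.e., for every ε > 0 the set {i : v(i)/w(i) ≥ ε} is finite. -/

import Mathlib

open MeasureTheory ENNReal Topology

section aux

variable {I : Type*}

/-- evaluation functional on `lp` -/
noncomputable def lpEval (p : ℝ≥0∞) [Fact (1 ≤ p)] (i : I) :
    lp (fun _ : I => ℂ) p →L[ℂ] ℂ :=
  LinearMap.mkContinuous
    { toFun := fun f => f i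
      map_add' := fun f g => congrFun (lp.coeFn_add f g) i
      map_smul' := fun a f => congrFun (lp.coeFn_smul a f) i }
    1 (fun f => by
      simpa using lp.norm_apply_le_norm
        (by have : (1:ℝ≥0∞) ≤ p := Fact.out; exact (lt_of_lt_of_le zero_lt_one this).ne') f i)

@[simp] lemma lpEval_apply (p : ℝ≥0∞) [Fact (1 ≤ p)] (i : I) (f : lp (fun _ : I => ℂ) p) :
    lpEval p i f = f i := rfl

lemma lp_norm_mono {p q : ℝ≥0∞} (hp : 1 ≤ p) (hpq : p ≤ q)
    (f : lp (fun _ : I => ℂ) p) (g : lp (fun _ : I => ℂ) q) (hfg : ∀ i, g i = f i) :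
    ‖g‖ ≤ ‖f‖ := by
  haveI : Fact (1 ≤ p) := ⟨hp⟩
  haveI : Fact (1 ≤ q) := ⟨hp.trans hpq⟩
  have hp0 : p ≠ 0 := (lt_of_lt_of_le zero_lt_one hp).ne'
  rcases eq_or_ne q ∞ with rfl | hq'
  · rcases eq_or_ne p ∞ with rfl | hp'
    · exact le_of_eq (by rw [lp.norm_eq_ciSup, lp.norm_eq_ciSup]; simp only [hfg])
    · exact lp.norm_le_of_forall_le (lp.norm_nonneg' f)
        (fun i => by rw [hfg]; exact lp.norm_apply_le_norm hp0 f i)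
  · have hp' : p ≠ ∞ := fun h => hq' (top_le_iff.mp (h ▸ hpq))
    have hpr : 0 < p.toReal := toReal_pos hp0 hp'
    have hqr : 0 < q.toReal := toReal_pos ((lt_of_lt_of_le zero_lt_one (hp.trans hpq))).ne' hq'
    have hpqr : p.toReal ≤ q.toReal := toReal_mono hq' hpq
    have key : ∀ (f : lp (fun _ : I => ℂ) p) (g : lp (fun _ : I => ℂ) q),
        (∀ i, g i = f i) → ‖f‖ ≤ 1 → ‖g‖ ≤ 1 := by
      intro f g hfg hf1
      apply lp.norm_le_of_tsum_le hqr zero_le_one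
      rw [Real.one_rpow]
      have hsg : Summable (fun i => ‖g i‖ ^ q.toReal) := (lp.hasSum_norm hqr g).summable
      have hsf : Summable (fun i => ‖f i‖ ^ p.toReal) := (lp.hasSum_norm hpr f).summable
      calc ∑' i, ‖g i‖ ^ q.toReal ≤ ∑' i, ‖f i‖ ^ p.toReal := by
            refine hsg.tsum_le_tsum (fun i => ?_) hsf
            rw [hfg]
            exact Real.rpow_le_rpow_of_exponent_ge' (norm_nonneg _)
              ((lp.norm_apply_le_norm hp0 f i).trans hf1) hpr.le hpqr
        _ = ‖f‖ ^ p.toReal := (lp.norm_rpow_eq_tsum hpr f).symm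
        _ ≤ 1 := Real.rpow_le_one (lp.norm_nonneg' _) hf1 hpr.le
    rcases eq_or_lt_of_le (lp.norm_nonneg' f) with hf0 | hf0
    · have hfz : f = 0 := by rwa [eq_comm, lp.norm_eq_zero_iff] at hf0
      have : g = 0 := by
        rw [lp.eq_zero_iff_coeFn_eq_zero]
        funext i
        rw [hfg i, hfz]
        simp [lp.coeFn_zero]
      simp [this, hfz]
    · set t : ℝ := ‖f‖ with ht
      have habs : ‖((t⁻¹ : ℝ) : ℂ)‖ = t⁻¹ := by
        rw [Complex.norm_real, Real.norm_eq_abs]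
        exact abs_of_pos (inv_pos.mpr hf0)
      have h1 : ‖((t⁻¹ : ℝ) : ℂ) • f‖ ≤ 1 := by
        rw [lp.norm_const_smul hp0, habs, inv_mul_cancel₀ hf0.ne']
      have h2 : ‖((t⁻¹ : ℝ) : ℂ) • g‖ ≤ 1 := by
        refine key (((t⁻¹ : ℝ) : ℂ) • f) (((t⁻¹ : ℝ) : ℂ) • g) (fun i => ?_) h1
        rw [lp.coeFn_smul, lp.coeFn_smul, Pi.smul_apply, Pi.smul_apply, hfg]
      rw [lp.norm_const_smul ((lt_of_lt_of_le zero_lt_one (hp.trans hpq)).ne'), habs] at h2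
      have h3 := mul_le_mul_of_nonneg_left h2 hf0.le
      rwa [← mul_assoc, mul_inv_cancel₀ hf0.ne', one_mul, mul_one] at h3


lemma memℓp_of_norm_le {r : ℝ≥0∞} (hr : r ≠ 0) {f g : I → ℂ} {C : ℝ} (hC : 0 ≤ C)
    (hf : Memℓp f r) (h : ∀ i, ‖g i‖ ≤ C * ‖f i‖) : Memℓp g r := by
  rcases eq_or_ne r ∞ with rfl | hr'
  · apply memℓp_infty
    obtain ⟨M, hM⟩ := memℓp_infty_iff.mp hf
    refine ⟨C * M, ?_⟩
    rintro x ⟨i, rfl⟩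
    exact (h i).trans (mul_le_mul_of_nonneg_left (hM ⟨i, rfl⟩) hC)
  · have hr0 : 0 < r.toReal := toReal_pos hr hr'
    apply memℓp_gen
    refine Summable.of_nonneg_of_le (fun i => Real.rpow_nonneg (norm_nonneg _) _)
      (fun i => ?_) (((hf.summable hr0).mul_left (C ^ r.toReal)))
    calc ‖g i‖ ^ r.toReal ≤ (C * ‖f i‖) ^ r.toReal :=
          Real.rpow_le_rpow (norm_nonneg _) (h i) hr0.le
      _ = C ^ r.toReal * ‖f i‖ ^ r.toReal := Real.mul_rpow hC (norm_nonneg _)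

lemma lp_norm_le_of_dominated {r : ℝ≥0∞} (hr : 1 ≤ r) {C : ℝ} (hC : 0 ≤ C)
    (f g : lp (fun _ : I => ℂ) r) (h : ∀ i, ‖g i‖ ≤ C * ‖f i‖) : ‖g‖ ≤ C * ‖f‖ := by
  haveI : Fact (1 ≤ r) := ⟨hr⟩
  have hr0 : r ≠ 0 := (lt_of_lt_of_le zero_lt_one hr).ne'
  rcases eq_or_ne r ∞ with rfl | hr'
  · exact lp.norm_le_of_forall_le (mul_nonneg hC (lp.norm_nonneg' f)) fun i =>
      (h i).trans (mul_le_mul_of_nonneg_left (lp.norm_apply_le_norm hr0 f i) hC)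
  · have hrr : 0 < r.toReal := toReal_pos hr0 hr'
    apply lp.norm_le_of_tsum_le hrr (mul_nonneg hC (lp.norm_nonneg' f))
    have hsg : Summable (fun i => ‖g i‖ ^ r.toReal) := (lp.hasSum_norm hrr g).summable
    have hsf : Summable (fun i => ‖f i‖ ^ r.toReal) := (lp.hasSum_norm hrr f).summable
    calc ∑' i, ‖g i‖ ^ r.toReal ≤ ∑' i, C ^ r.toReal * ‖f i‖ ^ r.toReal := by
          refine hsg.tsum_le_tsum (fun i => ?_) (hsf.mul_left _)
          rw [← Real.mul_rpow hC (norm_nonneg _)]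
          exact Real.rpow_le_rpow (norm_nonneg _) (h i) hrr.le
      _ = C ^ r.toReal * ∑' i, ‖f i‖ ^ r.toReal := tsum_mul_left
      _ = C ^ r.toReal * ‖f‖ ^ r.toReal := by rw [← lp.norm_rpow_eq_tsum hrr]
      _ = (C * ‖f‖) ^ r.toReal := (Real.mul_rpow hC (lp.norm_nonneg' f)).symm

/-- Two-exponent dominated norm bound. -/
lemma lp_norm_le_of_coord_bound {p q : ℝ≥0∞} (hp : 1 ≤ p) (hpq : p ≤ q) {C : ℝ} (hC : 0 ≤ C)
    (f : lp (fun _ : I => ℂ) p) (g : lp (fun _ : I => ℂ) q)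
    (h : ∀ i, ‖g i‖ ≤ C * ‖f i‖) : ‖g‖ ≤ C * ‖f‖ := by
  have hq : (1:ℝ≥0∞) ≤ q := hp.trans hpq
  set f' : lp (fun _ : I => ℂ) q := ⟨(f : ∀ _ : I, ℂ), (lp.memℓp f).of_exponent_ge hpq⟩ with hf'
  have hcoe : ∀ i, (f' : ∀ _ : I, ℂ) i = f i := fun i => rfl
  have h1 : ‖g‖ ≤ C * ‖f'‖ := lp_norm_le_of_dominated hq hC f' g (fun i => by rw [hcoe]; exact h i)
  exact h1.trans (mul_le_mul_of_nonneg_left (lp_norm_mono hp hpq f f' hcoe) hC)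

variable (p q : ℝ≥0∞) [Fact (1 ≤ p)] [Fact (1 ≤ q)]

lemma mul_memℓp (hpq : p ≤ q) {c : I → ℝ} {C : ℝ} (hC : 0 ≤ C)
    (hcC : ∀ i, |c i| ≤ C) (f : lp (fun _ : I => ℂ) p) :
    Memℓp (fun i => (c i : ℂ) * f i) q := by
  have hq : (1:ℝ≥0∞) ≤ q := Fact.out
  refine memℓp_of_norm_le ((lt_of_lt_of_le zero_lt_one hq).ne') hC
    ((lp.memℓp f).of_exponent_ge hpq) (fun i => ?_)
  rw [norm_mul, Complex.norm_real, Real.norm_eq_abs]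
  exact mul_le_mul_of_nonneg_right (hcC i) (norm_nonneg _)

/-- the multiplier continuous linear map -/
noncomputable def mulCLM (hpq : p ≤ q) (c : I → ℝ) {C : ℝ} (hC : 0 ≤ C)
    (hcC : ∀ i, |c i| ≤ C) : lp (fun _ : I => ℂ) p →L[ℂ] lp (fun _ : I => ℂ) q :=
  LinearMap.mkContinuous
    { toFun := fun f => ⟨fun i => (c i : ℂ) * f i, mul_memℓp p q hpq hC hcC f⟩
      map_add' := fun f g => by
        apply Subtype.ext
        funext i
        have := congrFun (lp.coeFn_add f g) i
        simp only [Pi.add_apply] at this ⊢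
        show (c i : ℂ) * (f + g : lp (fun _ : I => ℂ) p) i
            = (c i : ℂ) * f i + (c i : ℂ) * g i
        rw [this]; ring
      map_smul' := fun a f => by
        apply Subtype.ext
        funext i
        have := congrFun (lp.coeFn_smul a f) i
        simp only [Pi.smul_apply, smul_eq_mul] at this
        show (c i : ℂ) * (a • f : lp (fun _ : I => ℂ) p) i = a • ((c i : ℂ) * f i)
        rw [this, smul_eq_mul]; ring }
    C (fun f => by
      refine lp_norm_le_of_coord_bound Fact.out hpq hC f _ (fun i => ?_)
      show ‖(c i : ℂ) * f i‖ ≤ C * ‖f i‖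
      rw [norm_mul, Complex.norm_real, Real.norm_eq_abs]
      exact mul_le_mul_of_nonneg_right (hcC i) (norm_nonneg _))

@[simp] lemma mulCLM_apply (hpq : p ≤ q) (c : I → ℝ) {C : ℝ} (hC : 0 ≤ C)
    (hcC : ∀ i, |c i| ≤ C) (f : lp (fun _ : I => ℂ) p) (i : I) :
    (mulCLM p q hpq c hC hcC f : ∀ _ : I, ℂ) i = (c i : ℂ) * f i := rfl

/-- rank-one operators are compact -/
lemma isCompactOperator_smulRight {M N : Type*} [NormedAddCommGroup M] [NormedSpace ℂ M]
    [NormedAddCommGroup N] [NormedSpace ℂ N] (φ : M →L[ℂ] ℂ) (y : N) :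
    IsCompactOperator (φ.smulRight y) := by
  refine ⟨(fun a : ℂ => a • y) '' Metric.closedBall 0 (‖φ‖ + 1),
    ((isCompact_closedBall _ _).image (continuous_id.smul continuous_const)), ?_⟩
  refine Filter.mem_of_superset (Metric.ball_mem_nhds 0 one_pos) ?_
  intro f hf
  refine ⟨φ f, ?_, rfl⟩
  rw [Metric.mem_closedBall, dist_zero_right]
  calc ‖φ f‖ ≤ ‖φ‖ * ‖f‖ := φ.le_opNorm f
    _ ≤ ‖φ‖ * 1 := by
        refine mul_le_mul_of_nonneg_left ?_ (norm_nonneg _)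
        exact le_of_lt (by simpa [Metric.mem_ball, dist_zero_right] using hf)
    _ ≤ ‖φ‖ + 1 := by linarith [norm_nonneg φ]


lemma isCompactOperator_mulCLM_of_finite (hpq : p ≤ q) (c : I → ℝ) {C : ℝ} (hC : 0 ≤ C)
    (hcC : ∀ i, |c i| ≤ C) (hsupp : {i | c i ≠ 0}.Finite) :
    IsCompactOperator (mulCLM p q hpq c hC hcC) := by
  classical
  set F := hsupp.toFinset with hF
  have hrep : mulCLM p q hpq c hC hcC
      = ∑ i ∈ F, ((c i : ℂ) • lpEval p i).smulRight (lp.single q i (1 : ℂ)) := by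
    refine ContinuousLinearMap.ext (fun f => ?_)
    apply Subtype.ext
    funext j
    have hsum := ContinuousLinearMap.sum_apply F
      (fun i => ((c i : ℂ) • lpEval p i).smulRight (lp.single q i (1 : ℂ))) f
    show (c j : ℂ) * f j
        = ((∑ i ∈ F, ((c i : ℂ) • lpEval p i).smulRight (lp.single q i (1 : ℂ))) f
            : ∀ _ : I, ℂ) j
    rw [hsum, lp.coeFn_sum, Finset.sum_apply]
    have hterm : ∀ i ∈ F, ((((c i : ℂ) • lpEval p i).smulRight (lp.single q i (1 : ℂ)) f)
        : ∀ _ : I, ℂ) j = if j = i then (c i : ℂ) * f i else 0 := by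
      intro i _
      have hsm := lp.coeFn_smul (𝕜 := ℂ) (E := fun _ : I => ℂ) (p := q)
        ((((c i : ℂ) • lpEval p i)) f) (lp.single q i (1 : ℂ))
      rw [ContinuousLinearMap.smulRight_apply, congrFun hsm j, Pi.smul_apply,
        lp.single_apply]
      rcases eq_or_ne j i with h | h
      · subst h
        simp [smul_eq_mul, mul_comm]
      · simp [h]
    rw [Finset.sum_congr rfl hterm, Finset.sum_ite_eq]
    by_cases hj : j ∈ F
    · rw [if_pos hj]
    · rw [if_neg hj]
      have : c j = 0 := by
        by_contra hcj
        exact hj (hsupp.mem_toFinset.mpr hcj)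
      simp [this]
  rw [hrep]
  have : ∀ (s : Finset I), IsCompactOperator
      (⇑(∑ i ∈ s, ((c i : ℂ) • lpEval p i).smulRight (lp.single q i (1 : ℂ)))) := by
    intro s
    induction s using Finset.induction_on with
    | empty => simpa using isCompactOperator_zero
    | @insert a s hx ih =>
        rw [Finset.sum_insert hx]
        have h1 := isCompactOperator_smulRight
          ((c a : ℂ) • lpEval p a) (lp.single (E := fun _ : I => ℂ) q a (1 : ℂ))
        rw [ContinuousLinearMap.coe_add']
        exact h1.add ih
  exact this F

end aux

theorem weighted_lp_embedding_compact_iff_c0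
    {I : Type*} [Infinite I] (p q : ℝ≥0∞) [Fact (1 ≤ p)] [Fact (1 ≤ q)] (hp : 1 ≤ p) (hpq : p ≤ q)
    (w v : I → ℝ) (hw : ∀ i, 0 < w i) (hv : ∀ i, 0 < v i) :
    (∃ T : lp (fun _ : I => ℂ) p →L[ℂ] lp (fun _ : I => ℂ) q,
      (∀ (f : lp (fun _ : I => ℂ) p) (i : I), (T f : ∀ _ : I, ℂ) i = (v i / w i : ℝ) * f i) ∧
      IsCompactOperator T)
    ↔ (∀ ε : ℝ, 0 < ε → {i : I | ε ≤ v i / w i}.Finite) := by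
  classical
  set c : I → ℝ := fun i => v i / w i with hc
  have hcpos : ∀ i, 0 < c i := fun i => div_pos (hv i) (hw i)
  have hq1 : (1:ℝ≥0∞) ≤ q := hp.trans hpq
  have hq0 : q ≠ 0 := (lt_of_lt_of_le zero_lt_one hq1).ne'
  have hp0 : p ≠ 0 := (lt_of_lt_of_le zero_lt_one hp).ne'
  constructor
  · rintro ⟨T, hTf, hTc⟩ ε hε
    by_contra hfin
    have hS : {i : I | ε ≤ c i}.Infinite := hfin
    -- unit vectors
    set δ : I → lp (fun _ : I => ℂ) p := fun i => lp.single p i (1 : ℂ) with hδdef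
    have hδ : ∀ i, ‖δ i‖ ≤ 1 := by
      intro i
      rcases eq_or_ne p ∞ with rfl | hp'
      · refine lp.norm_le_of_forall_le zero_le_one (fun j => ?_)
        rw [hδdef, lp.single_apply]
        rcases eq_or_ne j i with h | h
        · subst h; simp
        · simp [h]
      · have := lp.norm_single (E := fun _ : I => ℂ) (p := p) (pos_iff_ne_zero.mpr hp0)
          i (1 : ℂ)
        rw [hδdef, this]
        simp
    obtain ⟨K, hK, hTK⟩ := hTc.image_closedBall_subset_compact 1
    obtain ⟨t, htfin, htcover⟩ := Metric.totallyBounded_iff.mp hK.totallyBounded (ε/3)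
      (by linarith)
    have hTδK : ∀ i, T (δ i) ∈ K := by
      intro i
      apply hTK
      exact ⟨δ i, by simpa [Metric.mem_closedBall, dist_zero_right] using hδ i, rfl⟩
    have hchoice : ∀ i : I, ∃ y, y ∈ t ∧ T (δ i) ∈ Metric.ball y (ε/3) := by
      intro i
      have := htcover (hTδK i)
      simpa using this
    choose g hg1 hg2 using hchoice
    obtain ⟨i, hiS, j, hjS, hij, hgij⟩ :=
      hS.exists_ne_map_eq_of_mapsTo (fun i _ => hg1 i) htfin
    -- upper bound on the distance
    have hdistlt : dist (T (δ i)) (T (δ j)) < 2 * (ε / 3) := by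
      calc dist (T (δ i)) (T (δ j)) ≤ dist (T (δ i)) (g i) + dist (T (δ j)) (g i) :=
            dist_triangle_right _ _ _
        _ < ε/3 + ε/3 := by
            have h2 := hg2 j
            rw [← hgij] at h2
            exact add_lt_add (Metric.mem_ball.mp (hg2 i)) (Metric.mem_ball.mp h2)
        _ = 2 * (ε/3) := by ring
    -- lower bound
    have hδii : (δ i : ∀ _ : I, ℂ) i = 1 := by
      rw [hδdef, lp.single_apply]; simp
    have hδji : (δ j : ∀ _ : I, ℂ) i = 0 := by
      rw [hδdef, lp.single_apply]
      simp [hij]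
    have hlow : ε ≤ dist (T (δ i)) (T (δ j)) := by
      rw [dist_eq_norm]
      have hcomp : ((T (δ i) - T (δ j) : lp (fun _ : I => ℂ) q) : ∀ _ : I, ℂ) i
          = (c i : ℂ) := by
        rw [lp.coeFn_sub, Pi.sub_apply, hTf (δ i) i, hTf (δ j) i, hδii, hδji]
        simp [hc]
      have := lp.norm_apply_le_norm hq0 (T (δ i) - T (δ j)) i
      rw [hcomp] at this
      refine le_trans ?_ this
      rw [Complex.norm_real, Real.norm_eq_abs, abs_of_pos (hcpos i)]
      exact hiS
    linarith
  · intro h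
    -- bound C on c
    set S₁ := (h 1 one_pos).toFinset with hS₁
    set C : ℝ := 1 + ∑ i ∈ S₁, c i with hCdef
    have hsum_nonneg : 0 ≤ ∑ i ∈ S₁, c i := Finset.sum_nonneg (fun i _ => (hcpos i).le)
    have hC : 0 ≤ C := by rw [hCdef]; linarith
    have hcC : ∀ i, |c i| ≤ C := by
      intro i
      rw [abs_of_pos (hcpos i)]
      by_cases hi : 1 ≤ c i
      · have hmem : i ∈ S₁ := (h 1 one_pos).mem_toFinset.mpr hi
        have := Finset.single_le_sum (f := c) (fun j _ => (hcpos j).le) hmem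
        rw [hCdef]; linarith
      · push_neg at hi
        rw [hCdef]; linarith
    refine ⟨mulCLM p q hpq c hC hcC, fun f i => rfl, ?_⟩
    -- truncated multipliers
    set ε : ℕ → ℝ := fun n => 1 / (n + 1) with hεdef
    have hεpos : ∀ n, 0 < ε n := fun n => by positivity
    set F : ℕ → Finset I := fun n => (h (ε n) (hεpos n)).toFinset with hFdef
    set cn : ℕ → I → ℝ := fun n i => if i ∈ F n then c i else 0 with hcndef
    have hcn0 : ∀ n i, |cn n i| ≤ C := by
      intro n i
      rw [hcndef]
      dsimp only
      split_ifs with hi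
      · exact hcC i
      · simpa using hC
    have hsupp : ∀ n, {i | cn n i ≠ 0}.Finite := by
      intro n
      apply (h (ε n) (hεpos n)).subset
      intro i hi
      rw [Set.mem_setOf_eq] at hi ⊢
      by_contra hcon
      apply hi
      rw [hcndef]
      dsimp only
      rw [if_neg (fun hmem => hcon ((h (ε n) (hεpos n)).mem_toFinset.mp hmem))]
    set Tn : ℕ → (lp (fun _ : I => ℂ) p →L[ℂ] lp (fun _ : I => ℂ) q) :=
      fun n => mulCLM p q hpq (cn n) hC (hcn0 n) with hTndef
    have hTn_compact : ∀ n, IsCompactOperator (Tn n) := fun n =>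
      isCompactOperator_mulCLM_of_finite p q hpq (cn n) hC (hcn0 n) (hsupp n)
    -- operator norm bound for the difference
    have hdiff : ∀ n, ‖Tn n - mulCLM p q hpq c hC hcC‖ ≤ ε n := by
      intro n
      refine ContinuousLinearMap.opNorm_le_bound _ (hεpos n).le (fun f => ?_)
      rw [ContinuousLinearMap.sub_apply]
      refine lp_norm_le_of_coord_bound hp hpq (hεpos n).le f _ (fun i => ?_)
      have hco : ((Tn n f - mulCLM p q hpq c hC hcC f : lp (fun _ : I => ℂ) q)
          : ∀ _ : I, ℂ) i = ((cn n i : ℝ) : ℂ) * f i - ((c i : ℝ) : ℂ) * f i := by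
        rw [lp.coeFn_sub, Pi.sub_apply]
        rfl
      rw [hco]
      rcases Finset.decidableMem i (F n) with hi | hi
      · -- i ∉ F n : |c i| < ε n
        have hcn_eq : cn n i = 0 := by rw [hcndef]; dsimp only; rw [if_neg hi]
        have hclt : c i < ε n := by
          by_contra hcon
          push_neg at hcon
          exact hi ((h (ε n) (hεpos n)).mem_toFinset.mpr hcon)
        rw [hcn_eq]
        simp only [Complex.ofReal_zero, zero_mul, zero_sub, norm_neg, norm_mul,
          Complex.norm_real, Real.norm_eq_abs, abs_of_pos (hcpos i)]
        exact mul_le_mul_of_nonneg_right hclt.le (norm_nonneg _)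
      · -- i ∈ F n : difference is zero
        have hcn_eq : cn n i = c i := by rw [hcndef]; dsimp only; rw [if_pos hi]
        rw [hcn_eq, sub_self, norm_zero]
        positivity
    have htend : Filter.Tendsto Tn Filter.atTop (𝓝 (mulCLM p q hpq c hC hcC)) := by
      rw [tendsto_iff_norm_sub_tendsto_zero]
      refine squeeze_zero (fun n => norm_nonneg _) hdiff ?_
      simpa [hεdef] using tendsto_one_div_add_atTop_nhds_zero_nat (𝕜 := ℝ)
    exact isCompactOperator_of_tendsto htend (Filter.Eventually.of_forall hTn_compact)
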